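/- Let G be an abelian metrizable group containing a uniformly discrete sequence (g_n)_{n∈ℕ} (witnessed by a symmetric open neighborhood W of 0 with 0 ∉ g_k + W + W + W + W for all k and g_k − g_n ∉ W + W + W + W for k ≠ n), let X be a G-Tychonoff first countable space, and let H ⊆ G^X contain {𝟎} ∪ ⋃_{n∈ℕ} σ(𝐠_n, 0). Then H (with the pointwise topology) is a k-space if and only if X is countable. -/

import Mathlib

open Filter Topology Pointwise

/-- `X` is `G`-Tychonoff: every point outside a closed set can be completely separated
from it by a continuous `G`-valued function taking prescribed (distinct) values. -/
def GTychonoff (X G : Type*) [TopologicalSpace X] [TopologicalSpace G] : Prop :=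
  ∀ A : Set X, IsClosed A → ∀ x ∉ A, ∀ y z : G, y ≠ z →
    ∃ f : X → G, Continuous f ∧ f x = y ∧ ∀ a ∈ A, f a = z

/-- A space is a k-space if a set is closed whenever its trace on every compact subset is
closed in that subset. -/
def IsKSpace (Y : Type*) [TopologicalSpace Y] : Prop :=
  ∀ A : Set Y, (∀ K : Set Y, IsCompact K → IsClosed {k : ↥K | (k : Y) ∈ A}) → IsClosed A

theorem isKSpace_of_sequential {Y : Type*} [TopologicalSpace Y] [SequentialSpace Y] :
    IsKSpace Y := by
  intro A hA
  refine IsSeqClosed.isClosed ?_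
  intro u p hu hup
  have hK : IsCompact (insert p (Set.range u)) := hup.isCompact_insert_range
  have h := hA _ hK
  set v : ℕ → ↥(insert p (Set.range u)) :=
    fun n => ⟨u n, Set.mem_insert_of_mem _ ⟨n, rfl⟩⟩ with hv
  have hvt : Tendsto v atTop (𝓝 (⟨p, Set.mem_insert _ _⟩ : ↥(insert p (Set.range u)))) :=
    tendsto_subtype_rng.mpr hup
  have hp : (⟨p, Set.mem_insert _ _⟩ : ↥(insert p (Set.range u))) ∈
      {k : ↥(insert p (Set.range u)) | (k : Y) ∈ A} :=
    h.mem_of_tendsto hvt (Filter.Eventually.of_forall fun n => hu n)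
  exact hp

/-- Let `G` be an abelian metrizable group containing a uniformly discrete sequence
`(gₙ)` (witnessed by `W`), `X` a `G`-Tychonoff first countable space, and `H ⊆ G^X`
containing `{𝟎} ∪ ⋃ₙ σ(𝐠ₙ, 0)`. Then `H` is a k-space iff `X` is countable. -/
theorem stmt18 {G X : Type*} [AddCommGroup G] [TopologicalSpace G] [IsTopologicalAddGroup G]
    [TopologicalSpace.MetrizableSpace G]
    [TopologicalSpace X] [FirstCountableTopology X]
    (hXG : GTychonoff X G)
    (W : Set G) (hWo : IsOpen W) (hW0 : (0 : G) ∈ W) (hWs : W = -W)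
    (g : ℕ → G)
    (hud1 : ∀ k, (0 : G) ∉ {g k} + W + W + W + W)
    (hud2 : ∀ k n, k ≠ n → g k - g n ∉ W + W + W + W)
    (H : Set (X → G)) (h0 : (0 : X → G) ∈ H)
    (hσ : ∀ n, {h : X → G | {x | h x ≠ g n}.Finite ∧ ∀ x, h x ≠ g n → h x = 0} ⊆ H) :
    IsKSpace ↥H ↔ Countable X := by
  classical
  -- basic consequences of uniform discreteness
  have hWneg : ∀ a ∈ W, -a ∈ W := by
    intro a ha
    rw [hWs] at ha
    simpa using ha
  have hgn0 : ∀ n, g n ≠ 0 := by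
    intro n hn
    apply hud1 n
    have : (0 : G) = g n + 0 + 0 + 0 + 0 := by rw [hn]; abel
    rw [this]
    exact Set.add_mem_add (Set.add_mem_add (Set.add_mem_add
      (Set.add_mem_add (Set.mem_singleton _) hW0) hW0) hW0) hW0
  have hgnW : ∀ n, g n ∉ W := by
    intro n hn
    apply hud1 n
    have : (0 : G) = g n + (-g n) + 0 + 0 + 0 := by abel
    rw [this]
    exact Set.add_mem_add (Set.add_mem_add (Set.add_mem_add
      (Set.add_mem_add (Set.mem_singleton _) (hWneg _ hn)) hW0) hW0) hW0
  have hsub4 : ∀ a ∈ W, ∀ b ∈ W, a - b ∈ W + W + W + W := by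
    intro a ha b hb
    have : a - b = a + (-b) + 0 + 0 := by abel
    rw [this]
    exact Set.add_mem_add (Set.add_mem_add (Set.add_mem_add ha (hWneg _ hb)) hW0) hW0
  constructor
  · -- forward: k-space ⇒ countable
    intro hk
    by_contra hX
    have hXinf : Infinite X := by
      by_contra hfin
      rw [not_infinite_iff_finite] at hfin
      exact hX (Finite.to_countable)
    -- the sets Aₙ
    set A : ℕ → Set (X → G) := fun n =>
      {f | (∀ x, f x = 0 ∨ f x = g n) ∧ {x | f x = 0}.Finite ∧ {x | f x = 0}.ncard ≤ n}
      with hAdef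
    have hAcl : ∀ n, IsClosed (A n) := by
      intro n
      rw [← closure_subset_iff_isClosed]
      intro f hf
      have hval : ∀ x, f x = 0 ∨ f x = g n := by
        intro x
        have hcl : closure (A n) ⊆ (fun f : X → G => f x) ⁻¹' ({0, g n} : Set G) := by
          apply closure_minimal
          · intro h hh
            rcases hh.1 x with h1 | h1 <;> simp [h1]
          · exact IsClosed.preimage (continuous_apply x)
              ((Set.finite_singleton (g n)).insert 0).isClosed
        rcases hcl hf with h1 | h1
        · exact Or.inl h1
        · exact Or.inr h1
      have hkey : ¬ ∃ s : Finset X, ↑s ⊆ {x | f x = 0} ∧ s.card = n + 1 := by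
        rintro ⟨s, hs, hcard⟩
        have hUopen : IsOpen {h : X → G | ∀ x ∈ s, h x ∈ W} := by
          have : {h : X → G | ∀ x ∈ s, h x ∈ W} = ⋂ x ∈ s, (fun h : X → G => h x) ⁻¹' W := by
            ext h; simp
          rw [this]
          exact isOpen_biInter_finset fun x _ => (hWo.preimage (continuous_apply x))
        have hfU : f ∈ {h : X → G | ∀ x ∈ s, h x ∈ W} := by
          intro x hx
          have : f x = 0 := hs hx
          rw [this]; exact hW0
        obtain ⟨h, hhU, hhA⟩ := (mem_closure_iff.mp hf) _ hUopen hfU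
        have hzero : ↑s ⊆ {x | h x = 0} := by
          intro x hx
          rcases hhA.1 x with h1 | h1
          · exact h1
          · exact absurd (h1 ▸ hhU x hx) (hgnW n)
        have h2 := Set.ncard_le_ncard hzero hhA.2.1
        rw [Set.ncard_coe_finset, hcard] at h2
        have h3 := hhA.2.2
        omega
      have hZfin : {x | f x = 0}.Finite := by
        by_contra hinf
        have hinf' : {x | f x = 0}.Infinite := hinf
        obtain ⟨s, hs, hcard⟩ := hinf'.exists_subset_card_eq (n + 1)
        exact hkey ⟨s, hs, hcard⟩
      refine ⟨hval, hZfin, ?_⟩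
      by_contra hcard
      obtain ⟨t, ht, htc⟩ :=
        Set.exists_subset_card_eq (n := n + 1) (Nat.succ_le_of_lt (not_le.mp hcard))
      have htfin : t.Finite := hZfin.subset ht
      refine hkey ⟨htfin.toFinset, ?_, ?_⟩
      · intro x hx
        exact ht (htfin.mem_toFinset.mp hx)
      · rw [← Set.ncard_coe_finset, Set.Finite.coe_toFinset]
        exact htc
    -- Aₙ ⊆ H
    have hAsub : ∀ n, A n ⊆ H := by
      intro n f hf
      apply hσ n
      have hss : {x | f x ≠ g n} ⊆ {x | f x = 0} := by
        intro x hx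
        rcases hf.1 x with h1 | h1
        · exact h1
        · exact absurd h1 hx
      exact ⟨hf.2.1.subset hss, fun x hx => by
        rcases hf.1 x with h1 | h1
        · exact h1
        · exact absurd h1 hx⟩
    have hUsub : (⋃ n, A n) ⊆ H := Set.iUnion_subset hAsub
    -- 0 is not in the union
    have hA0 : (0 : X → G) ∉ ⋃ n, A n := by
      intro hmem
      obtain ⟨n, hn⟩ := Set.mem_iUnion.mp hmem
      have hu : {x : X | (0 : X → G) x = 0} = Set.univ := by ext x; simp
      have hfin := hn.2.1
      rw [hu] at hfin
      exact Set.infinite_univ hfin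
    -- 0 is in the closure of the union
    have hclo : (0 : X → G) ∈ closure (⋃ n, A n) := by
      rw [mem_closure_iff]
      intro U hU h0U
      obtain ⟨I, u, hIu, hpi⟩ := isOpen_pi_iff.mp hU _ h0U
      set n := I.card
      refine ⟨fun x => if x ∈ I then 0 else g n, ?_, ?_⟩
      · apply hpi
        intro x hx
        simp only [Set.mem_setOf_eq]
        rw [if_pos (by exact_mod_cast hx)]
        exact (hIu x (by exact_mod_cast hx)).2
      · refine Set.mem_iUnion.mpr ⟨n, ?_, ?_, ?_⟩
        · intro x
          by_cases hx : x ∈ I <;> simp [hx]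
        · have : {x | (if x ∈ I then (0:G) else g n) = 0} = ↑I := by
            ext x
            by_cases hx : x ∈ I <;> simp [hx, hgn0 n]
          rw [this]; exact I.finite_toSet
        · have : {x | (if x ∈ I then (0:G) else g n) = 0} = ↑I := by
            ext x
            by_cases hx : x ∈ I <;> simp [hx, hgn0 n]
          rw [this, Set.ncard_coe_finset]
    -- apply k-space property to the trace of ⋃ Aₙ on H
    set A' : Set ↥H := {h : ↥H | (h : X → G) ∈ ⋃ n, A n} with hA'def
    have hA'cl : IsClosed A' := by
      apply hk
      intro K hK
      -- image of K in G^X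
      set K' : Set (X → G) := (fun h : ↥H => (h : X → G)) '' K with hK'def
      have hK'comp : IsCompact K' := hK.image continuous_subtype_val
      set T : Set ℕ := {n | (A n ∩ K').Nonempty} with hTdef
      have hTfin : T.Finite := by
        by_contra hTinf'
        have hTinf : T.Infinite := hTinf'
        -- choose witnesses
        classical
        set φ : ℕ → (X → G) := fun n =>
          if h : (A n ∩ K').Nonempty then h.choose else (fun _ => g n) with hφdef
        have hφmem : ∀ n ∈ T, φ n ∈ A n ∩ K' := by
          intro n hn
          have hn' : (A n ∩ K').Nonempty := hn
          simp only [hφdef]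
          rw [dif_pos hn']
          exact hn'.choose_spec
        have hZcnt : (⋃ n, {x | φ n x = 0}).Countable := by
          apply Set.countable_iUnion
          intro n
          by_cases h : (A n ∩ K').Nonempty
          · have := (hφmem n h).1.2.1
            exact this.countable
          · have : {x | φ n x = 0} = ∅ := by
              ext x
              simp [hφdef, dif_neg h, hgn0 n]
            rw [this]; exact Set.countable_empty
        have : ∃ x₀, x₀ ∉ ⋃ n, {x | φ n x = 0} := by
          by_contra hall
          push_neg at hall
          apply hX
          rw [← Set.countable_univ_iff]
          exact hZcnt.mono (fun x _ => hall x)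
        obtain ⟨x₀, hx₀⟩ := this
        have hgval : ∀ n ∈ T, φ n x₀ = g n := by
          intro n hn
          rcases (hφmem n hn).1.1 x₀ with h1 | h1
          · exact absurd (Set.mem_iUnion.mpr ⟨n, h1⟩) hx₀
          · exact h1
        -- the compact set of values at x₀
        set C : Set G := (fun f : X → G => f x₀) '' K' with hCdef
        have hCcomp : IsCompact C := hK'comp.image (continuous_apply x₀)
        have hgC : ∀ n ∈ T, g n ∈ C := by
          intro n hn
          exact ⟨φ n, (hφmem n hn).2, hgval n hn⟩
        -- finite subcover by translates of W
        obtain ⟨t, _, ht⟩ := hCcomp.elim_nhds_subcover (fun c => {y | y - c ∈ W}) (by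
          intro c _
          refine IsOpen.mem_nhds (hWo.preimage (continuous_id.sub continuous_const)) ?_
          simp [hW0])
        have hTsub : T ⊆ ⋃ c ∈ t, {n | g n - c ∈ W} := by
          intro n hn
          have h1 := ht (hgC n hn)
          simp only [Set.mem_iUnion, Set.mem_setOf_eq] at h1 ⊢
          exact h1
        have hfin2 : ∀ c ∈ t, {n | g n - c ∈ W}.Finite := by
          intro c _
          apply Set.Subsingleton.finite
          intro a ha b hb
          by_contra hab
          refine hud2 a b hab ?_
          have heq : g a - g b = (g a - c) - (g b - c) := by abel
          rw [heq]
          exact hsub4 _ ha _ hb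
        exact hTinf ((t.finite_toSet.biUnion hfin2).subset hTsub)
      -- the trace is a closed set
      have : {k : ↥K | (k : ↥H) ∈ A'} =
          (fun k : ↥K => ((k : ↥H) : X → G)) ⁻¹' (⋃ n ∈ T, A n) := by
        ext k
        simp only [Set.mem_setOf_eq, hA'def, Set.mem_preimage, Set.mem_iUnion]
        constructor
        · rintro ⟨n, hn⟩
          have hnT : n ∈ T := ⟨((k : ↥H) : X → G), hn, Set.mem_image_of_mem _ k.2⟩
          exact ⟨n, hnT, hn⟩
        · rintro ⟨n, _, hn⟩
          exact ⟨n, hn⟩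
      rw [this]
      exact IsClosed.preimage (continuous_subtype_val.comp continuous_subtype_val)
        (hTfin.isClosed_biUnion fun n _ => hAcl n)
    -- contradiction: 0 ∈ closure A' \ A'
    have h0cl : (⟨0, h0⟩ : ↥H) ∈ closure A' := by
      rw [closure_subtype]
      have himg : Subtype.val '' A' = ⋃ n, A n := by
        ext f
        constructor
        · rintro ⟨h, hh, rfl⟩; exact hh
        · intro hf; exact ⟨⟨f, hUsub hf⟩, hf, rfl⟩
      rw [himg]
      exact hclo
    exact hA0 (hA'cl.closure_subset h0cl)
  · -- reverse: countable ⇒ metrizable ⇒ sequential ⇒ k-space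
    intro hcnt
    haveI : Countable X := hcnt
    haveI : FirstCountableTopology (X → G) := inferInstance
    haveI : FirstCountableTopology ↥H := inferInstance
    exact isKSpace_of_sequential
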